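/- arXiv:2405.01860 — 2 statements merged into one kernel-verified Lean document; each statement's English description precedes it below -/
import Mathlib

section
/- If a metric space X is compact, Lipschitz connected, and its intrinsic metric d_IX is totally bounded (for every ε > 0 there is a finite set F ⊆ X such that every x ∈ X satisfies d_IX(x,y) < ε for some y ∈ F), then there exist a compact metric space Y which is an ℝ-tree and a surjective 1-Lipschitz map γ : Y → X. -/
/-- The metric segment `[x,z] = {y : d(x,y) + d(y,z) = d(x,z)}`. -/
def MetricSegment {X : Type*} [MetricSpace X] (x z : X) : Set X :=
  {y | dist x y + dist y z = dist x z}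

/-- A metric space is an ℝ-tree if every metric segment `[x,y]` is isometric to the
real interval `[0, d(x,y)]`, and `[x,y] ∩ [y,z] = {y}` implies `d(x,z) = d(x,y) + d(y,z)`. -/
def IsRTree (X : Type*) [MetricSpace X] : Prop :=
  (∀ x y : X, Nonempty ((MetricSegment x y) ≃ᵢ (Set.Icc (0:ℝ) (dist x y)))) ∧
  (∀ x y z : X, MetricSegment x y ∩ MetricSegment y z = {y} →
    dist x z = dist x y + dist y z)

/-- A metric space `X` is injective if every 1-Lipschitz map into `X` from a subset of a
metric space extends to a 1-Lipschitz map on the whole space. -/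
def IsInjectiveMetricSpace (X : Type*) [MetricSpace X] : Prop :=
  ∀ (A : Type) [MetricSpace A] (B : Set A) (f : B → X), LipschitzWith 1 f →
    ∃ g : A → X, LipschitzWith 1 g ∧ ∀ b : B, g b = f b

/-- A metric space is Lipschitz connected if any two points are joined by a Lipschitz
path `f : [0,1] → X`. -/
def LipschitzConnected (X : Type*) [MetricSpace X] : Prop :=
  ∀ x y : X, ∃ f : Set.Icc (0:ℝ) 1 → X, (∃ K : NNReal, LipschitzWith K f) ∧
    f ⟨0, by norm_num⟩ = x ∧ f ⟨1, by norm_num⟩ = y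

/-- The intrinsic metric: the infimum of Lipschitz constants of paths joining `x` and `y`. -/
noncomputable def intrinsicDist {X : Type*} [MetricSpace X] (x y : X) : ℝ :=
  sInf {K : ℝ | 0 ≤ K ∧ ∃ f : Set.Icc (0:ℝ) 1 → X,
    LipschitzWith K.toNNReal f ∧ f ⟨0, by norm_num⟩ = x ∧ f ⟨1, by norm_num⟩ = y}

/-- A metric space is analytic if it is a continuous image of a complete separable
metric space. -/
def IsAnalyticMetricSpace (X : Type*) [MetricSpace X] : Prop :=
  ∃ (Z : Type) (_ : MetricSpace Z) (_ : CompleteSpace Z)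
    (_ : TopologicalSpace.SeparableSpace Z) (g : Z → X),
      Continuous g ∧ Function.Surjective g

/-- `L`-Lipschitz connectedness: any two points `x,y` are joined by an `L`-Lipschitz
path defined on `[0, d(x,y)]`. -/
def LLipschitzConnected (L : NNReal) (Y : Type*) [MetricSpace Y] : Prop :=
  ∀ x y : Y, ∃ f : Set.Icc (0:ℝ) (dist x y) → Y, LipschitzWith L f ∧
    f ⟨0, ⟨le_refl 0, dist_nonneg⟩⟩ = x ∧ f ⟨dist x y, ⟨dist_nonneg, le_refl _⟩⟩ = y

/-- Hyperconvexity: every family of closed balls with `d(xᵢ,xⱼ) ≤ rᵢ + rⱼ` has a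
common point. -/
def Hyperconvex (X : Type*) [MetricSpace X] : Prop :=
  ∀ (I : Type) (x : I → X) (r : I → ℝ), (∀ i, 0 ≤ r i) →
    (∀ i j, dist (x i) (x j) ≤ r i + r j) →
    (⋂ i, Metric.closedBall (x i) (r i)).Nonempty

/-- Metric convexity. -/
def MetricallyConvex (X : Type*) [MetricSpace X] : Prop :=
  ∀ a b : X, ∀ t : ℝ, t ∈ Set.Icc (0:ℝ) 1 →
    ∃ x : X, dist a x = t * dist a b ∧ dist x b = (1 - t) * dist a b

/-- Binary intersection property: every family of pairwise intersecting closed balls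
has a common point. -/
def BinaryIntersectionProperty (X : Type*) [MetricSpace X] : Prop :=
  ∀ (I : Type) (x : I → X) (r : I → ℝ),
    (∀ i j, (Metric.closedBall (x i) (r i) ∩ Metric.closedBall (x j) (r j)).Nonempty) →
    (⋂ i, Metric.closedBall (x i) (r i)).Nonempty


namespace RT
open Set

variable {X : Type} [MetricSpace X]

def PSet (x y : X) : Set ℝ :=
  {K : ℝ | 0 ≤ K ∧ ∃ f : Set.Icc (0:ℝ) 1 → X,
    LipschitzWith K.toNNReal f ∧ f ⟨0, by norm_num⟩ = x ∧ f ⟨1, by norm_num⟩ = y}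

lemma intrinsicDist_eq (x y : X) : intrinsicDist x y = sInf (PSet x y) := rfl

lemma PSet_nonempty (h : LipschitzConnected X) (x y : X) : (PSet x y).Nonempty := by
  obtain ⟨f, ⟨K, hK⟩, h0, h1⟩ := h x y
  exact ⟨K, K.coe_nonneg, f, by simpa [Real.toNNReal_coe] using hK, h0, h1⟩

lemma dist_le_PSet {x y : X} {K : ℝ} (hK : K ∈ PSet x y) : dist x y ≤ K := by
  obtain ⟨h0, f, hf, hx, hy⟩ := hK
  have h2 := hf.dist_le_mul ⟨0, by norm_num⟩ ⟨1, by norm_num⟩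
  rw [hx, hy] at h2
  have h3 : dist (⟨0, by norm_num⟩ : Set.Icc (0:ℝ) 1) ⟨1, by norm_num⟩ = 1 := by
    rw [Subtype.dist_eq, Real.dist_eq]; norm_num
  rw [h3, mul_one] at h2
  exact h2.trans_eq (Real.coe_toNNReal _ h0)

lemma dist_le_intrinsic (h : LipschitzConnected X) (x y : X) :
    dist x y ≤ intrinsicDist x y :=
  le_csInf (PSet_nonempty h x y) fun _ hK => dist_le_PSet hK

lemma PSet_symm {x y : X} {K : ℝ} (hK : K ∈ PSet x y) : K ∈ PSet y x := by
  obtain ⟨h0, f, hf, hx, hy⟩ := hK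
  refine ⟨h0, fun t => f ⟨1 - t.1, ⟨by linarith [t.2.2], by linarith [t.2.1]⟩⟩, ?_, by simpa, by simpa⟩
  have hr : LipschitzWith 1 (fun t : Set.Icc (0:ℝ) 1 =>
      (⟨1 - t.1, ⟨by linarith [t.2.2], by linarith [t.2.1]⟩⟩ : Set.Icc (0:ℝ) 1)) := by
    apply LipschitzWith.mk_one
    intro a b
    rw [Subtype.dist_eq, Subtype.dist_eq, Real.dist_eq, Real.dist_eq]
    simp only
    have he : (1 - (a:ℝ)) - (1 - (b:ℝ)) = (b:ℝ) - (a:ℝ) := by ring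
    rw [he, abs_sub_comm]
  simpa [Function.comp_def] using hf.comp hr

lemma exists_path_lt (h : LipschitzConnected X) {x y : X} {c : ℝ}
    (hc : intrinsicDist x y < c) : ∃ K ∈ PSet x y, K < c := by
  exact exists_lt_of_csInf_lt (PSet_nonempty h x y) hc

structure TD (X : Type) [MetricSpace X] where
  F : ℕ → Set X
  Ffin : ∀ n, (F n).Finite
  x0 : X
  par : (Σ n : ℕ, {z : X // z ∈ F n}) → Option (Σ n : ℕ, {z : X // z ∈ F n})
  len : (Σ n : ℕ, {z : X // z ∈ F n}) → ℝ
  pth : (Σ n : ℕ, {z : X // z ∈ F n}) → Set.Icc (0:ℝ) 1 → X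
  bot : (Σ n : ℕ, {z : X // z ∈ F n}) → X
  len_nonneg : ∀ v, 0 ≤ len v
  par_isSome : ∀ v, 1 ≤ v.1 → (par v).isSome
  par_some : ∀ v y, par v = some y → y.1 + 1 = v.1
  len_le : ∀ v, 1 ≤ v.1 → len v ≤ (1/2 : ℝ)^(v.1 - 1)
  pth_lip : ∀ v, LipschitzWith (len v).toNNReal (pth v)
  pth_zero : ∀ v, pth v ⟨0, by norm_num⟩ = bot v
  pth_one : ∀ v, pth v ⟨1, by norm_num⟩ = v.2.1
  bot_root : ∀ v, par v = none → bot v = x0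
  bot_par : ∀ v y, par v = some y → bot v = y.2.1

variable (T : TD X)

abbrev Vtx := Σ n : ℕ, {z : X // z ∈ T.F n}

def anc : ℕ → Vtx T → Option (Vtx T)
  | 0, v => some v
  | j+1, v => (anc j v).bind T.par

lemma anc_zero (v : Vtx T) : anc T 0 v = some v := rfl

lemma anc_add (a b : ℕ) (v : Vtx T) : anc T (a+b) v = (anc T a v).bind (anc T b) := by
  induction b with
  | zero => cases h : anc T a v <;> simp [anc, h]
  | succ b ih =>
    have he : a + (b+1) = (a+b)+1 := by omega
    rw [he]
    show ((anc T (a+b) v).bind T.par) = _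
    rw [ih, Option.bind_assoc]
    rfl

lemma anc_level : ∀ (j : ℕ) (v w : Vtx T), anc T j v = some w → w.1 + j = v.1 := by
  intro j
  induction j with
  | zero => intro v w hw; rw [anc_zero] at hw; cases hw; omega
  | succ j ih =>
    intro v w hw
    rcases Option.bind_eq_some_iff.mp hw with ⟨u, hu, hpu⟩
    have h1 := ih v u hu
    have h2 := T.par_some u w hpu
    omega

lemma anc_isSome : ∀ (j : ℕ) (v : Vtx T), j ≤ v.1 → (anc T j v).isSome := by
  intro j
  induction j with
  | zero => intro v _; simp [anc_zero]
  | succ j ih =>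
    intro v hj
    have h1 := ih v (by omega)
    rcases Option.isSome_iff_exists.mp h1 with ⟨u, hu⟩
    have h2 := anc_level T j v u hu
    have h3 := T.par_isSome u (by omega)
    show ((anc T j v).bind T.par).isSome
    rw [hu]
    simpa using h3

def ch (v : Vtx T) (k : ℕ) : Option (Vtx T) := if k ≤ v.1 then anc T (v.1 - k) v else none

lemma ch_self (v : Vtx T) : ch T v v.1 = some v := by simp [ch, anc_zero]

lemma ch_isSome {v : Vtx T} {k : ℕ} (h : k ≤ v.1) : (ch T v k).isSome := by
  rw [ch, if_pos h]; exact anc_isSome T _ v (by omega)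

lemma ch_eq_none {v : Vtx T} {k : ℕ} (h : v.1 < k) : ch T v k = none := by
  rw [ch, if_neg (by omega)]

lemma ch_some_le {v : Vtx T} {k : ℕ} {w : Vtx T} (h : ch T v k = some w) : k ≤ v.1 := by
  by_contra hk
  rw [ch_eq_none T (by omega)] at h
  exact nomatch h

lemma ch_level {v : Vtx T} {k : ℕ} {w : Vtx T} (h : ch T v k = some w) : w.1 = k := by
  have hk := ch_some_le T h
  rw [ch, if_pos hk] at h
  have := anc_level T _ _ _ h
  omega

lemma ch_ch {v : Vtx T} {k : ℕ} {w : Vtx T} (h : ch T v k = some w) :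
    ∀ j, j ≤ k → ch T w j = ch T v j := by
  intro j hj
  have hk := ch_some_le T h
  have hwl : w.1 = k := ch_level T h
  have h1 : ch T w j = anc T (k - j) w := by rw [ch, if_pos (by omega), hwl]
  have h2 : ch T v j = anc T (v.1 - j) v := by rw [ch, if_pos (by omega)]
  have h3 : v.1 - j = (v.1 - k) + (k - j) := by omega
  rw [h1, h2, h3, anc_add]
  have h4 : anc T (v.1 - k) v = some w := by rw [ch, if_pos hk] at h; exact h
  rw [h4]
  rfl

lemma ch_par {v y : Vtx T} (h : T.par v = some y) {k : ℕ} (hk : k ≤ y.1) :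
    ch T v k = ch T y k := by
  have hl := T.par_some v y h
  have h1 : ch T v k = anc T (v.1 - k) v := by rw [ch, if_pos (by omega)]
  have h2 : v.1 - k = 1 + (y.1 - k) := by omega
  rw [h1, h2, anc_add]
  have h3 : anc T 1 v = T.par v := by
    show ((some v).bind T.par) = T.par v
    rfl
  rw [h3, h, ch, if_pos hk]
  rfl

noncomputable def Nag (x y : Vtx T) : ℕ := sInf {k | ¬(ch T x k = ch T y k ∧ (ch T x k).isSome)}

lemma Nag_nonempty (x y : Vtx T) :
    {k | ¬(ch T x k = ch T y k ∧ (ch T x k).isSome)}.Nonempty := by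
  refine ⟨x.1 + 1, ?_⟩
  rw [Set.mem_setOf_eq, ch_eq_none T (by omega)]
  simp

lemma Nag_le_of {x y : Vtx T} {k : ℕ}
    (h : ¬(ch T x k = ch T y k ∧ (ch T x k).isSome)) : Nag T x y ≤ k :=
  Nat.sInf_le h

lemma Nag_mem (x y : Vtx T) :
    ¬(ch T x (Nag T x y) = ch T y (Nag T x y) ∧ (ch T x (Nag T x y)).isSome) :=
  Nat.sInf_mem (Nag_nonempty T x y)

lemma lt_Nag {x y : Vtx T} {k : ℕ} :
    k < Nag T x y ↔ (ch T x k = ch T y k ∧ (ch T x k).isSome) := by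
  constructor
  · intro hk
    by_contra hc
    exact absurd (Nag_le_of T hc) (by omega)
  · rintro ⟨he, hs⟩
    by_contra hc
    push_neg at hc
    have hmem := Nag_mem T x y
    rcases Option.isSome_iff_exists.mp hs with ⟨w, hw⟩
    have hN : Nag T x y ≤ k := hc
    have h1 : ch T x (Nag T x y) = ch T w (Nag T x y) := (ch_ch T hw _ hN).symm
    have h2 : ch T y (Nag T x y) = ch T w (Nag T x y) := by
      rw [he] at hw; exact (ch_ch T hw _ hN).symm
    have h3 : (ch T w (Nag T x y)).isSome := ch_isSome T (by
      have := ch_level T hw; omega)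
    exact hmem ⟨h1.trans h2.symm, by rw [h1]; exact h3⟩

lemma Nag_le (x y : Vtx T) : Nag T x y ≤ x.1 + 1 := by
  apply Nat.sInf_le
  rw [Set.mem_setOf_eq, ch_eq_none T (by omega)]
  simp

lemma Nag_symm (x y : Vtx T) : Nag T x y = Nag T y x := by
  unfold Nag
  congr 1
  ext k
  simp only [Set.mem_setOf_eq, not_and]
  constructor
  · intro h1 h2 hs; exact h1 h2.symm (h2 ▸ hs)
  · intro h1 h2 hs; exact h1 h2.symm (h2 ▸ hs)

lemma self_lt_Nag (x : Vtx T) : x.1 < Nag T x x :=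
  (lt_Nag T).mpr ⟨rfl, ch_isSome T le_rfl⟩

end RT
namespace RT
open Set

variable {X : Type} [MetricSpace X] (T : TD X)

def olen : Option (Vtx T) → ℝ
  | none => 0
  | some v => T.len v

lemma olen_nonneg (o : Option (Vtx T)) : 0 ≤ olen T o := by
  cases o with
  | none => exact le_rfl
  | some v => exact T.len_nonneg v

def Sm (x : Vtx T) (n : ℕ) : ℝ := ∑ k ∈ Finset.range n, olen T (ch T x k)

lemma Sm_nonneg (x : Vtx T) (n : ℕ) : 0 ≤ Sm T x n :=
  Finset.sum_nonneg fun k _ => olen_nonneg T _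

lemma Sm_mono (x : Vtx T) {a b : ℕ} (h : a ≤ b) : Sm T x a ≤ Sm T x b := by
  apply Finset.sum_le_sum_of_subset_of_nonneg (Finset.range_subset_range.mpr h)
  exact fun k _ _ => olen_nonneg T _

lemma Sm_congr {x y : Vtx T} {n : ℕ} (h : ∀ k, k < n → ch T x k = ch T y k) :
    Sm T x n = Sm T y n := by
  apply Finset.sum_congr rfl
  intro k hk
  rw [h k (Finset.mem_range.mp hk)]

lemma lt_of_Sm_lt {x : Vtx T} {a b : ℕ} (h : Sm T x a < Sm T x b) : a < b := by
  by_contra hc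
  exact absurd (Sm_mono T x (by omega : b ≤ a)) (by linarith)

def Dv (x : Vtx T) : ℝ := Sm T x (x.1 + 1)

lemma Dv_eq (x : Vtx T) : Dv T x = Sm T x x.1 + T.len x := by
  rw [Dv, Sm, Finset.sum_range_succ, ch_self]
  rfl

@[ext] structure Pt where
  v : Vtx T
  t : ℝ
  pos : 0 < t
  tle : t ≤ T.len v

abbrev Y0 := Option (Pt T)

def Hgt : Y0 T → ℝ
  | none => 0
  | some p => Sm T p.v p.v.1 + p.t

lemma Hgt_none : Hgt T none = 0 := rfl

lemma Hgt_some (p : Pt T) : Hgt T (some p) = Sm T p.v p.v.1 + p.t := rfl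

lemma Hgt_nonneg (p : Y0 T) : 0 ≤ Hgt T p := by
  cases p with
  | none => exact le_rfl
  | some p => exact add_nonneg (Sm_nonneg T _ _) p.pos.le

lemma Hgt_pos (p : Pt T) : 0 < Hgt T (some p) :=
  add_pos_of_nonneg_of_pos (Sm_nonneg T _ _) p.pos

lemma Hgt_le_Dv (p : Pt T) : Hgt T (some p) ≤ Dv T p.v := by
  rw [Hgt_some, Dv_eq]
  linarith [p.tle]

noncomputable def Ev : Y0 T → Y0 T → ℝ
  | some p, some q => Sm T p.v (Nag T p.v q.v)
  | _, _ => 0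

lemma Ev_nonneg (p q : Y0 T) : 0 ≤ Ev T p q := by
  cases p with
  | none => exact le_rfl
  | some p => cases q with
    | none => exact le_rfl
    | some q => exact Sm_nonneg T _ _

lemma Ev_symm (p q : Y0 T) : Ev T p q = Ev T q p := by
  cases p with
  | none => cases q <;> rfl
  | some p =>
    cases q with
    | none => rfl
    | some q =>
      show Sm T p.v (Nag T p.v q.v) = Sm T q.v (Nag T q.v p.v)
      rw [← Nag_symm T p.v q.v]
      apply Sm_congr
      intro k hk
      exact ((lt_Nag T).mp hk).1

noncomputable def Mt (p q : Y0 T) : ℝ := min (Hgt T p) (min (Hgt T q) (Ev T p q))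

lemma Mt_nonneg (p q : Y0 T) : 0 ≤ Mt T p q :=
  le_min (Hgt_nonneg T p) (le_min (Hgt_nonneg T q) (Ev_nonneg T p q))

lemma Mt_le_left (p q : Y0 T) : Mt T p q ≤ Hgt T p := min_le_left _ _

lemma Mt_le_right (p q : Y0 T) : Mt T p q ≤ Hgt T q := (min_le_right _ _).trans (min_le_left _ _)

lemma Mt_le_Ev (p q : Y0 T) : Mt T p q ≤ Ev T p q := (min_le_right _ _).trans (min_le_right _ _)

lemma Mt_symm (p q : Y0 T) : Mt T p q = Mt T q p := by
  rw [Mt, Mt, Ev_symm]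
  rw [min_comm (Hgt T p) _, min_assoc, min_comm (Hgt T p) _, ← min_assoc]

lemma Mt_none_left (q : Y0 T) : Mt T none q = 0 := by
  apply le_antisymm (Mt_le_left T none q) (Mt_nonneg T none q)

lemma Mt_self (p : Y0 T) : Mt T p p = Hgt T p := by
  cases p with
  | none => exact Mt_none_left T none
  | some p =>
    have h1 : Hgt T (some p) ≤ Ev T (some p) (some p) := by
      show Hgt T (some p) ≤ Sm T p.v (Nag T p.v p.v)
      calc Hgt T (some p) ≤ Dv T p.v := Hgt_le_Dv T p
        _ ≤ Sm T p.v (Nag T p.v p.v) := Sm_mono T _ (self_lt_Nag T p.v)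
    simp [Mt, h1]

lemma Ev_tri (x y z : Vtx T) :
    min (Sm T x (Nag T x y)) (Sm T y (Nag T y z)) ≤ Sm T x (Nag T x z) := by
  rcases le_total (Nag T x y) (Nag T y z) with hm | hm
  · -- min of Nags is Nag x y
    have hle : Nag T x y ≤ Nag T x z := by
      by_contra hc
      push_neg at hc
      have hk : Nag T x z < Nag T x y := hc
      have h1 := (lt_Nag T).mp (lt_of_lt_of_le hk hm : Nag T x z < Nag T y z)
      have h2 := (lt_Nag T).mp hk
      exact (Nag_mem T x z) ⟨h2.1.trans h1.1, h2.2⟩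
    exact (min_le_left _ _).trans (Sm_mono T x hle)
  · have hle : Nag T y z ≤ Nag T x z := by
      by_contra hc
      push_neg at hc
      have hk : Nag T x z < Nag T y z := hc
      have h1 := (lt_Nag T).mp (lt_of_lt_of_le hk hm : Nag T x z < Nag T x y)
      have h2 := (lt_Nag T).mp hk
      exact (Nag_mem T x z) ⟨h1.1.trans h2.1, h1.2⟩
    have heq : Sm T y (Nag T y z) = Sm T x (Nag T y z) := by
      apply Sm_congr
      intro k hk
      exact (((lt_Nag T).mp (lt_of_lt_of_le hk hm : k < Nag T x y)).1).symm
    rw [min_comm]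
    refine (min_le_left _ _).trans ?_
    rw [heq]
    exact Sm_mono T x hle

lemma Mt_min (p q r : Y0 T) : min (Mt T p q) (Mt T q r) ≤ Mt T p r := by
  refine le_min ((min_le_left _ _).trans (Mt_le_left T p q)) (le_min ((min_le_right _ _).trans (Mt_le_right T q r)) ?_)
  cases p with
  | none => exact (min_le_left _ _).trans ((Mt_le_left T none q).trans ((Ev_nonneg T none r)))
  | some p =>
    cases r with
    | none => exact (min_le_right _ _).trans ((Mt_le_right T q none).trans ((Ev_nonneg T _ none)))
    | some r =>
      cases q with
      | none => exact (min_le_left _ _).trans ((Mt_le_right T _ none).trans ((Ev_nonneg T _ _)))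
      | some q =>
        refine le_trans (min_le_min (Mt_le_Ev T _ _) (Mt_le_Ev T _ _)) ?_
        exact Ev_tri T p.v q.v r.v

noncomputable def dist0 (p q : Y0 T) : ℝ := Hgt T p + Hgt T q - 2 * Mt T p q

lemma dist0_self (p : Y0 T) : dist0 T p p = 0 := by
  rw [dist0, Mt_self]; ring

lemma dist0_comm (p q : Y0 T) : dist0 T p q = dist0 T q p := by
  rw [dist0, dist0, Mt_symm]; ring

lemma dist0_triangle (p q r : Y0 T) : dist0 T p r ≤ dist0 T p q + dist0 T q r := by
  have h1 := Mt_min T p q r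
  have h2 : Mt T p q ≤ Hgt T q := Mt_le_right T p q
  have h3 : Mt T q r ≤ Hgt T q := Mt_le_left T q r
  have h4 : Mt T p q + Mt T q r ≤ Hgt T q + Mt T p r := by
    rcases le_total (Mt T p q) (Mt T q r) with hm | hm
    · have := min_eq_left hm ▸ h1
      linarith
    · have := min_eq_right hm ▸ h1
      linarith
  rw [dist0, dist0, dist0]
  linarith

lemma dist0_eq_zero {p q : Y0 T} (h : dist0 T p q = 0) : p = q := by
  have h1 : Mt T p q ≤ Hgt T p := Mt_le_left T p q
  have h2 : Mt T p q ≤ Hgt T q := Mt_le_right T p q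
  have hp : Hgt T p = Mt T p q := by rw [dist0] at h; linarith
  have hq : Hgt T q = Mt T p q := by rw [dist0] at h; linarith
  cases p with
  | none =>
    cases q with
    | none => rfl
    | some q =>
      exfalso
      have := Hgt_pos T q
      rw [hq, Mt_none_left] at this
      exact lt_irrefl _ this
  | some p =>
    cases q with
    | none =>
      exfalso
      have := Hgt_pos T p
      rw [hp, Mt_symm, Mt_none_left] at this
      exact lt_irrefl _ this
    | some q =>
      have hEp : Hgt T (some p) ≤ Sm T p.v (Nag T p.v q.v) := by
        rw [hp]; exact Mt_le_Ev T _ _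
      have hEq : Hgt T (some q) ≤ Sm T q.v (Nag T q.v p.v) := by
        rw [hq, Mt_symm]; exact Mt_le_Ev T _ _
      have hx : p.v.1 < Nag T p.v q.v := by
        apply lt_of_Sm_lt T (x := p.v)
        calc Sm T p.v p.v.1 < Hgt T (some p) := by rw [Hgt_some]; linarith [p.pos]
          _ ≤ _ := hEp
      have hy : q.v.1 < Nag T q.v p.v := by
        apply lt_of_Sm_lt T (x := q.v)
        calc Sm T q.v q.v.1 < Hgt T (some q) := by rw [Hgt_some]; linarith [q.pos]
          _ ≤ _ := hEq
      have hxy : Nag T p.v q.v ≤ p.v.1 + 1 := Nag_le T _ _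
      have hyx : Nag T q.v p.v ≤ q.v.1 + 1 := Nag_le T _ _
      rw [Nag_symm T q.v p.v] at hyx hy
      have hlev : p.v.1 = q.v.1 := by omega
      have hvv : p.v = q.v := by
        have hc := ((lt_Nag T).mp hx).1
        rw [ch_self] at hc
        rw [hlev] at hc
        rw [ch_self] at hc
        exact Option.some_injective _ hc
      have hb : Sm T p.v p.v.1 = Sm T q.v q.v.1 := by rw [hvv]
      have ht : p.t = q.t := by
        have := hp.trans hq.symm
        rw [Hgt_some, Hgt_some] at this
        rw [hb] at this
        linarith
      congr 1
      exact Pt.ext hvv ht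

noncomputable instance Y0Metric : MetricSpace (Y0 T) where
  dist := dist0 T
  dist_self := dist0_self T
  dist_comm := dist0_comm T
  dist_triangle := fun p q r => dist0_triangle T p q r
  eq_of_dist_eq_zero := fun h => dist0_eq_zero T h

lemma dist_eq_dist0 (p q : Y0 T) : dist p q = dist0 T p q := rfl

end RT
namespace RT
open Set

variable {X : Type} [MetricSpace X] (T : TD X)

lemma par_none_of_level {x : Vtx T} (hx : x.1 = 0) : T.par x = none := by
  cases hp : T.par x with
  | none => rfl
  | some y => have := T.par_some x y hp; omega

def mkPt (x : Vtx T) (h : ℝ) (h1 : Sm T x x.1 < h) (h2 : h ≤ Dv T x) : Pt T :=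
  ⟨x, h - Sm T x x.1, by linarith, by have h3 := h2; rw [Dv_eq] at h3; linarith⟩

open scoped Classical in
noncomputable def bptA : ℕ → Vtx T → ℝ → Y0 T
  | 0, _, _ => none
  | m+1, x, h =>
    if hc : Sm T x x.1 < h ∧ h ≤ Dv T x then some (mkPt T x h hc.1 hc.2)
    else if h ≤ Sm T x x.1 then
      match T.par x with
      | some y => bptA m y h
      | none => none
    else none

noncomputable def bpt (x : Vtx T) (h : ℝ) : Y0 T := bptA T (x.1+1) x h

lemma bpt_seg {x : Vtx T} {h : ℝ} (h1 : Sm T x x.1 < h) (h2 : h ≤ Dv T x) :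
    bpt T x h = some (mkPt T x h h1 h2) := by
  show bptA T (x.1+1) x h = _
  simp only [bptA]
  rw [dif_pos ⟨h1, h2⟩]

lemma bpt_step {x y : Vtx T} {h : ℝ} (hp : T.par x = some y) (hh : h ≤ Sm T x x.1) :
    bpt T x h = bpt T y h := by
  have hl := T.par_some x y hp
  show bptA T (x.1+1) x h = bptA T (y.1+1) y h
  conv_lhs => simp only [bptA]
  rw [dif_neg (by push_neg; intro hc; linarith), if_pos hh]
  simp only [hp]
  rw [← hl]

lemma bpt_of_par_none {x : Vtx T} {h : ℝ} (hp : T.par x = none) (hh : h ≤ Sm T x x.1) :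
    bpt T x h = none := by
  show bptA T (x.1+1) x h = none
  conv_lhs => simp only [bptA]
  rw [dif_neg (by push_neg; intro hc; linarith), if_pos hh]
  simp only [hp]

lemma bpt_nonpos {h : ℝ} (hh : h ≤ 0) {x : Vtx T} : bpt T x h = none := by
  suffices H : ∀ n (x : Vtx T), x.1 ≤ n → bpt T x h = none from H x.1 x le_rfl
  intro n
  induction n with
  | zero =>
    intro x hx
    exact bpt_of_par_none T (par_none_of_level T (by omega)) (hh.trans (Sm_nonneg T _ _))
  | succ n ih =>
    intro x hx
    cases hp : T.par x with
    | none => exact bpt_of_par_none T hp (hh.trans (Sm_nonneg T _ _))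
    | some y =>
      rw [bpt_step T hp (hh.trans (Sm_nonneg T _ _))]
      exact ih y (by have := T.par_some x y hp; omega)

lemma bpt_spec {h : ℝ} (h0 : 0 < h) {x : Vtx T} (hD : h ≤ Dv T x) :
    ∃ p : Pt T, bpt T x h = some p ∧ ch T x p.v.1 = some p.v ∧
      p.t = h - Sm T p.v p.v.1 ∧ Sm T p.v p.v.1 < h := by
  suffices H : ∀ n (x : Vtx T), x.1 ≤ n → h ≤ Dv T x → ∃ p : Pt T, bpt T x h = some p ∧
      ch T x p.v.1 = some p.v ∧ p.t = h - Sm T p.v p.v.1 ∧ Sm T p.v p.v.1 < h from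
    H x.1 x le_rfl hD
  intro n
  induction n with
  | zero =>
    intro x hx hD
    have hS : Sm T x x.1 < h := by
      have : Sm T x x.1 = 0 := by
        have : x.1 = 0 := by omega
        rw [this, Sm]; simp
      linarith
    exact ⟨mkPt T x h hS hD, bpt_seg T hS hD, by
      show ch T x x.1 = some x; exact ch_self T x, rfl, hS⟩
  | succ n ih =>
    intro x hx hD
    by_cases hS : Sm T x x.1 < h
    · exact ⟨mkPt T x h hS hD, bpt_seg T hS hD, by
        show ch T x x.1 = some x; exact ch_self T x, rfl, hS⟩
    · push_neg at hS
      have hx1 : 1 ≤ x.1 := by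
        by_contra hc
        have hx0 : x.1 = 0 := by omega
        have : Sm T x x.1 = 0 := by rw [hx0, Sm]; simp
        linarith
      rcases Option.isSome_iff_exists.mp (T.par_isSome x hx1) with ⟨y, hp⟩
      have hl := T.par_some x y hp
      have hDy : Dv T y = Sm T x x.1 := by
        have hcg : Sm T y (y.1+1) = Sm T x (y.1+1) := by
          apply Sm_congr
          intro k hk
          exact (ch_par T hp (by omega)).symm
        rw [Dv, hcg, hl]
      have hy := ih y (by omega) (by rw [hDy]; exact hS)
      rcases hy with ⟨p, hb, hc, ht, hS'⟩
      refine ⟨p, ?_, ?_, ht, hS'⟩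
      · rw [bpt_step T hp hS]; exact hb
      · rw [ch_par T hp (ch_some_le T hc)]; exact hc

lemma bpt_anc {x w : Vtx T} {k : ℕ} (hc : ch T x k = some w) {h : ℝ}
    (hh : h ≤ Sm T x (k+1)) : bpt T x h = bpt T w h := by
  suffices H : ∀ n (x : Vtx T), x.1 ≤ n → ch T x k = some w → h ≤ Sm T x (k+1) →
      bpt T x h = bpt T w h from H x.1 x le_rfl hc hh
  intro n
  induction n with
  | zero =>
    intro x hx hc hh
    have hk := ch_some_le T hc
    have : k = x.1 := by omega
    rw [this, ch_self] at hc
    rw [Option.some_injective _ hc]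
  | succ n ih =>
    intro x hx hc hh
    have hk := ch_some_le T hc
    rcases eq_or_lt_of_le hk with he | hlt
    · rw [he, ch_self] at hc
      rw [Option.some_injective _ hc]
    · have hx1 : 1 ≤ x.1 := by omega
      rcases Option.isSome_iff_exists.mp (T.par_isSome x hx1) with ⟨y, hp⟩
      have hl := T.par_some x y hp
      have hky : k ≤ y.1 := by omega
      have hstep : bpt T x h = bpt T y h := by
        apply bpt_step T hp
        exact hh.trans (Sm_mono T x (by omega))
      rw [hstep]
      have hcg : Sm T x (k+1) = Sm T y (k+1) := by
        apply Sm_congr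
        intro j hj
        exact ch_par T hp (by omega)
      exact ih y (by omega) (by rw [← ch_par T hp hky]; exact hc) (by rw [← hcg]; exact hh)

lemma Hgt_bpt {h : ℝ} (h0 : 0 ≤ h) {x : Vtx T} (hD : h ≤ Dv T x) :
    Hgt T (bpt T x h) = h := by
  rcases eq_or_lt_of_le h0 with he | hpos
  · rw [bpt_nonpos T he.ge, Hgt_none, he]
  · rcases bpt_spec T hpos hD with ⟨p, hb, hc, ht, _⟩
    rw [hb, Hgt_some, ht]
    ring

lemma Nag_gt_of_ch {x : Vtx T} {p : Vtx T} (hc : ch T x p.1 = some p) :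
    p.1 < Nag T p x := by
  apply (lt_Nag T).mpr
  constructor
  · exact ch_ch T hc p.1 le_rfl
  · exact ch_isSome T le_rfl

lemma Mt_bpt (p : Pt T) {h : ℝ} (h0 : 0 ≤ h) (hle : h ≤ Hgt T (some p)) :
    Mt T (bpt T p.v h) (some p) = h := by
  rcases eq_or_lt_of_le h0 with he | hpos
  · rw [bpt_nonpos T he.ge, Mt_none_left, he]
  · have hD : h ≤ Dv T p.v := hle.trans (Hgt_le_Dv T p)
    rcases bpt_spec T hpos hD with ⟨p', hb, hc, ht, hS⟩
    rw [hb]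
    have hH : Hgt T (some p') = h := by rw [Hgt_some, ht]; ring
    have hNag : p'.v.1 < Nag T p'.v p.v := Nag_gt_of_ch T hc
    have hEv : h ≤ Ev T (some p') (some p) := by
      show h ≤ Sm T p'.v (Nag T p'.v p.v)
      calc h = Hgt T (some p') := hH.symm
        _ ≤ Dv T p'.v := Hgt_le_Dv T p'
        _ ≤ Sm T p'.v (Nag T p'.v p.v) := Sm_mono T _ hNag
    rw [Mt, hH]
    rw [min_eq_left (le_min hle hEv)]

lemma Mt_bpt_other {pp : Pt T} (q : Y0 T) (h : ℝ) (h1 : Mt T (some pp) q ≤ h)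
    (h2 : h ≤ Hgt T (some pp)) : Mt T (bpt T pp.v h) q = Mt T (some pp) q := by
  have h0 : 0 ≤ h := (Mt_nonneg T _ _).trans h1
  have hz : Mt T (bpt T pp.v h) (some pp) = h := Mt_bpt T pp h0 h2
  have hge : Mt T (some pp) q ≤ Mt T (bpt T pp.v h) q := by
    have := Mt_min T (bpt T pp.v h) (some pp) q
    rw [hz] at this
    calc Mt T (some pp) q = min h (Mt T (some pp) q) := (min_eq_right h1).symm
      _ ≤ _ := this
  have hle : Mt T (bpt T pp.v h) q ≤ Mt T (some pp) q := by
    by_contra hcon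
    push_neg at hcon
    have hmin := Mt_min T (some pp) (bpt T pp.v h) q
    rw [Mt_symm T (some pp) (bpt T pp.v h), hz] at hmin
    have hh : h ≤ Mt T (some pp) q := by
      rcases min_le_iff.mp hmin with hca | hca
      · exact hca
      · linarith
    have hhe : h = Mt T (some pp) q := le_antisymm hh h1
    have : Mt T (bpt T pp.v h) q ≤ h := by
      calc Mt T (bpt T pp.v h) q ≤ Hgt T (bpt T pp.v h) := Mt_le_left T _ _
        _ = h := Hgt_bpt T h0 (h2.trans (Hgt_le_Dv T pp))
    linarith
  linarith

lemma mpt_eq (p q : Pt T) :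
    bpt T p.v (Mt T (some p) (some q)) = bpt T q.v (Mt T (some p) (some q)) := by
  rcases eq_or_lt_of_le (Mt_nonneg T (some p) (some q)) with he | hpos
  · rw [bpt_nonpos T he.ge, bpt_nonpos T he.ge]
  · have hEv : Mt T (some p) (some q) ≤ Sm T p.v (Nag T p.v q.v) := Mt_le_Ev T (some p) (some q)
    have hN : 0 < Nag T p.v q.v := by
      apply lt_of_Sm_lt T (x := p.v) (a := 0)
      have : Sm T p.v 0 = 0 := by rw [Sm]; simp
      rw [this]
      exact lt_of_lt_of_le hpos hEv
    set k := Nag T p.v q.v - 1 with hk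
    have hkN : k < Nag T p.v q.v := by omega
    have hag := (lt_Nag T).mp hkN
    rcases Option.isSome_iff_exists.mp hag.2 with ⟨w, hw⟩
    have hw' : ch T q.v k = some w := by rw [← hag.1]; exact hw
    have hkk : k + 1 = Nag T p.v q.v := by omega
    have h1 : bpt T p.v (Mt T (some p) (some q)) = bpt T w (Mt T (some p) (some q)) := by
      apply bpt_anc T hw
      rw [hkk]
      exact hEv
    have h2 : bpt T q.v (Mt T (some p) (some q)) = bpt T w (Mt T (some p) (some q)) := by
      apply bpt_anc T hw'
      rw [hkk]
      have hcg : Sm T q.v (Nag T p.v q.v) = Sm T p.v (Nag T p.v q.v) := by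
        apply Sm_congr
        intro j hj
        exact ((lt_Nag T).mp (by omega : j < Nag T p.v q.v)).1.symm
      rw [hcg]
      exact hEv
    rw [h1, h2]

lemma dist_bpt (p : Pt T) {h : ℝ} (h0 : 0 ≤ h) (hle : h ≤ Hgt T (some p)) :
    dist0 T (some p) (bpt T p.v h) = Hgt T (some p) - h := by
  rw [dist0, Hgt_bpt T h0 (hle.trans (Hgt_le_Dv T p)), Mt_symm, Mt_bpt T p h0 hle]
  ring

lemma exists_mid (p q : Y0 T) {t : ℝ} (h0 : 0 ≤ t) (ht : t ≤ dist0 T p q) :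
    ∃ z : Y0 T, dist0 T p z = t ∧ dist0 T z q = dist0 T p q - t := by
  cases p with
  | none =>
    cases q with
    | none =>
      rw [dist0_self] at ht ⊢
      exact ⟨none, by rw [dist0_self]; linarith, by rw [dist0_self]; linarith⟩
    | some q =>
      have hd : dist0 T none (some q) = Hgt T (some q) := by
        rw [dist0, Mt_none_left, Hgt_none]; ring
      rw [hd] at ht ⊢
      have hD : t ≤ Dv T q.v := ht.trans (Hgt_le_Dv T q)
      refine ⟨bpt T q.v t, ?_, ?_⟩
      · rw [dist0, Hgt_none, Hgt_bpt T h0 hD, Mt_none_left]; ring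
      · rw [dist0_comm, dist_bpt T q h0 ht]
  | some p =>
    cases q with
    | none =>
      have hd : dist0 T (some p) none = Hgt T (some p) := by
        rw [dist0, Mt_symm, Mt_none_left, Hgt_none]; ring
      rw [hd] at ht ⊢
      refine ⟨bpt T p.v (Hgt T (some p) - t), ?_, ?_⟩
      · rw [dist_bpt T p (by linarith) (by linarith)]; ring
      · rw [dist0_comm, dist0, Hgt_none, Mt_none_left,
          Hgt_bpt T (by linarith) ((by linarith : Hgt T (some p) - t ≤ Hgt T (some p)).trans (Hgt_le_Dv T p))]
        ring
    | some q =>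
      have hM0 : 0 ≤ Mt T (some p) (some q) := Mt_nonneg T _ _
      have hMp : Mt T (some p) (some q) ≤ Hgt T (some p) := Mt_le_left T _ _
      have hMq : Mt T (some p) (some q) ≤ Hgt T (some q) := Mt_le_right T _ _
      have hdd : dist0 T (some p) (some q) =
          (Hgt T (some p) - Mt T (some p) (some q)) + (Hgt T (some q) - Mt T (some p) (some q)) := by
        rw [dist0]; ring
      by_cases hc : t ≤ Hgt T (some p) - Mt T (some p) (some q)
      · have hb2 : Hgt T (bpt T p.v (Hgt T (some p) - t)) = Hgt T (some p) - t :=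
          Hgt_bpt T (by linarith) ((by linarith : Hgt T (some p) - t ≤ Hgt T (some p)).trans (Hgt_le_Dv T p))
        have hb3 : Mt T (bpt T p.v (Hgt T (some p) - t)) (some q) = Mt T (some p) (some q) :=
          Mt_bpt_other T (some q) _ (by linarith) (by linarith)
        refine ⟨bpt T p.v (Hgt T (some p) - t), ?_, ?_⟩
        · rw [dist_bpt T p (by linarith) (by linarith)]; ring
        · rw [dist0, dist0, hb2, hb3]; ring
      · push_neg at hc
        have hu0 : 0 ≤ dist0 T (some p) (some q) - t := by linarith
        have huc : dist0 T (some p) (some q) - t ≤ Hgt T (some q) - Mt T (some p) (some q) := by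
          rw [hdd]; linarith
        have hb2 : Hgt T (bpt T q.v (Hgt T (some q) - (dist0 T (some p) (some q) - t))) =
            Hgt T (some q) - (dist0 T (some p) (some q) - t) :=
          Hgt_bpt T (by linarith)
            ((by linarith : Hgt T (some q) - (dist0 T (some p) (some q) - t) ≤ Hgt T (some q)).trans (Hgt_le_Dv T q))
        have hb3 : Mt T (bpt T q.v (Hgt T (some q) - (dist0 T (some p) (some q) - t))) (some p) =
            Mt T (some q) (some p) :=
          Mt_bpt_other T (some p) _ (by rw [Mt_symm]; linarith) (by linarith)
        refine ⟨bpt T q.v (Hgt T (some q) - (dist0 T (some p) (some q) - t)), ?_, ?_⟩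
        · rw [dist0_comm, dist0, hb2, hb3, Mt_symm T (some q) (some p), hdd]; ring
        · rw [dist0_comm, dist_bpt T q (by linarith) (by linarith)]; ring

lemma tree4 {ab ac ad bc bd cd : ℝ}
    (h1 : min ac bc ≤ ab) (h2 : min ad bd ≤ ab)
    (h3 : min ac ad ≤ cd) (h4 : min bc bd ≤ cd) :
    min (ac + bd) (ad + bc) ≤ ab + cd := by
  rcases le_total (ac + bd) (ad + bc) with hg | hg
  · rw [min_eq_left hg]
    rcases min_le_iff.mp h1 with h1' | h1' <;> rcases min_le_iff.mp h2 with h2' | h2' <;>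
      rcases min_le_iff.mp h3 with h3' | h3' <;> rcases min_le_iff.mp h4 with h4' | h4' <;> linarith
  · rw [min_eq_right hg]
    rcases min_le_iff.mp h1 with h1' | h1' <;> rcases min_le_iff.mp h2 with h2' | h2' <;>
      rcases min_le_iff.mp h3 with h3' | h3' <;> rcases min_le_iff.mp h4 with h4' | h4' <;> linarith

lemma fourpt0 (a b c d : Y0 T) :
    dist0 T a b + dist0 T c d ≤ max (dist0 T a c + dist0 T b d) (dist0 T a d + dist0 T b c) := by
  have h1 := Mt_min T a c b
  have h2 := Mt_min T a d b
  have h3 := Mt_min T c a d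
  have h4 := Mt_min T c b d
  rw [Mt_symm T c b] at h1 h4
  rw [Mt_symm T d b] at h2
  rw [Mt_symm T c a] at h3
  have h5 := tree4 h1 h2 h3 h4
  rcases min_le_iff.mp h5 with hca | hca
  · refine le_trans ?_ (le_max_left _ _)
    simp only [dist0]
    linarith
  · refine le_trans ?_ (le_max_right _ _)
    simp only [dist0]
    linarith

end RT
namespace RT
open Set

variable {X : Type} [MetricSpace X] (T : TD X)

noncomputable def gpt (v : Vtx T) (t : ℝ) (h1 : 0 < t) (h2 : t ≤ T.len v) : X :=
  T.pth v ⟨t / T.len v, div_nonneg h1.le (h1.trans_le h2).le, (div_le_one (h1.trans_le h2)).mpr h2⟩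

noncomputable def gam0 : Y0 T → X
  | none => T.x0
  | some p => gpt T p.v p.t p.pos p.tle

lemma gam0_none : gam0 T none = T.x0 := rfl

lemma gam0_some (p : Pt T) : gam0 T (some p) = gpt T p.v p.t p.pos p.tle := rfl

lemma pth_dist (v : Vtx T) (a b : Set.Icc (0:ℝ) 1) :
    dist (T.pth v a) (T.pth v b) ≤ T.len v * |a.1 - b.1| := by
  have h := (T.pth_lip v).dist_le_mul a b
  rwa [Subtype.dist_eq, Real.dist_eq, Real.coe_toNNReal _ (T.len_nonneg v)] at h

lemma gpt_dist (v : Vtx T) {s t : ℝ} (hs1 : 0 < s) (hs2 : s ≤ T.len v)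
    (ht1 : 0 < t) (ht2 : t ≤ T.len v) :
    dist (gpt T v s hs1 hs2) (gpt T v t ht1 ht2) ≤ |s - t| := by
  have hlen : 0 < T.len v := hs1.trans_le hs2
  refine le_trans (pth_dist T v _ _) ?_
  apply le_of_eq
  show T.len v * |s / T.len v - t / T.len v| = |s - t|
  rw [div_sub_div_same, abs_div, abs_of_pos hlen, mul_div_cancel₀ _ (ne_of_gt hlen)]

lemma gam_bot (p : Pt T) : dist (gam0 T (some p)) (T.bot p.v) ≤ p.t := by
  rw [gam0_some, ← T.pth_zero p.v]
  refine le_trans (pth_dist T p.v _ _) ?_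
  apply le_of_eq
  show T.len p.v * |p.t / T.len p.v - 0| = p.t
  have hlen : 0 < T.len p.v := p.pos.trans_le p.tle
  rw [sub_zero, abs_of_nonneg (div_nonneg p.pos.le hlen.le), mul_div_cancel₀ _ (ne_of_gt hlen)]

lemma bot_elt (v : Vtx T) : dist (T.bot v) v.2.1 ≤ T.len v := by
  rw [← T.pth_zero v, ← T.pth_one v]
  refine le_trans (pth_dist T v _ _) ?_
  norm_num

lemma gam_tip (v : Vtx T) (h : 0 < T.len v) :
    gam0 T (some ⟨v, T.len v, h, le_rfl⟩) = v.2.1 := by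
  rw [gam0_some, ← T.pth_one v]
  show T.pth v _ = _
  congr 1
  exact Subtype.ext (div_self (ne_of_gt h))

lemma level0_of_par_none {x : Vtx T} (hp : T.par x = none) : x.1 = 0 := by
  by_contra hc
  have := T.par_isSome x (by omega)
  simp [hp] at this

lemma Sm_level0 {x : Vtx T} (hx : x.1 = 0) : Sm T x x.1 = 0 := by
  rw [hx, Sm]
  simp

lemma gam_bpt_elt {h : ℝ} (h0 : 0 ≤ h) {x : Vtx T} (hD : h ≤ Dv T x) :
    dist (gam0 T (bpt T x h)) x.2.1 ≤ Dv T x - h := by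
  suffices H : ∀ n (x : Vtx T), x.1 ≤ n → h ≤ Dv T x →
      dist (gam0 T (bpt T x h)) x.2.1 ≤ Dv T x - h from H x.1 x le_rfl hD
  clear hD
  intro n
  induction n with
  | zero =>
    intro x hx hD
    by_cases hS : Sm T x x.1 < h
    · rw [bpt_seg T hS hD, gam0_some, ← T.pth_one x]
      have hlen : 0 < T.len x := by rw [Dv_eq] at hD; linarith
      refine le_trans (pth_dist T x _ _) ?_
      show T.len x * |(h - Sm T x x.1) / T.len x - 1| ≤ Dv T x - h
      have h1 : (h - Sm T x x.1) / T.len x ≤ 1 := (div_le_one hlen).mpr (by rw [Dv_eq] at hD; linarith)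
      rw [abs_of_nonpos (by linarith)]
      have h2 : T.len x * -((h - Sm T x x.1) / T.len x - 1) = T.len x - (h - Sm T x x.1) := by
        field_simp
        ring
      rw [h2, Dv_eq]
      linarith
    · push_neg at hS
      have hx0 : x.1 = 0 := by omega
      have hS0 : Sm T x x.1 = 0 := Sm_level0 T hx0
      have hh0 : h = 0 := by rw [hS0] at hS; linarith
      rw [bpt_of_par_none T (par_none_of_level T hx0) hS, gam0_none,
        ← T.bot_root x (par_none_of_level T hx0), hh0, Dv_eq, hS0]
      simpa using bot_elt T x
  | succ n ih =>
    intro x hx hD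
    by_cases hS : Sm T x x.1 < h
    · rw [bpt_seg T hS hD, gam0_some, ← T.pth_one x]
      have hlen : 0 < T.len x := by rw [Dv_eq] at hD; linarith
      refine le_trans (pth_dist T x _ _) ?_
      show T.len x * |(h - Sm T x x.1) / T.len x - 1| ≤ Dv T x - h
      have h1 : (h - Sm T x x.1) / T.len x ≤ 1 := (div_le_one hlen).mpr (by rw [Dv_eq] at hD; linarith)
      rw [abs_of_nonpos (by linarith)]
      have h2 : T.len x * -((h - Sm T x x.1) / T.len x - 1) = T.len x - (h - Sm T x x.1) := by
        field_simp
        ring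
      rw [h2, Dv_eq]
      linarith
    · push_neg at hS
      cases hp : T.par x with
      | none =>
        have hx0 : x.1 = 0 := level0_of_par_none T hp
        have hS0 : Sm T x x.1 = 0 := Sm_level0 T hx0
        have hh0 : h = 0 := by rw [hS0] at hS; linarith
        rw [bpt_of_par_none T hp hS, gam0_none, ← T.bot_root x hp, hh0, Dv_eq, hS0]
        simpa using bot_elt T x
      | some y =>
        have hl := T.par_some x y hp
        have hDy : Dv T y = Sm T x x.1 := by
          have hcg : Sm T y (y.1+1) = Sm T x (y.1+1) := by
            apply Sm_congr
            intro k hk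
            exact (ch_par T hp (by omega)).symm
          rw [Dv, hcg, hl]
        rw [bpt_step T hp hS]
        calc dist (gam0 T (bpt T y h)) x.2.1
            ≤ dist (gam0 T (bpt T y h)) y.2.1 + dist y.2.1 x.2.1 := dist_triangle _ _ _
          _ ≤ (Dv T y - h) + T.len x := by
              have hb := ih y (by omega) (by rw [hDy]; exact hS)
              have hbe : dist y.2.1 x.2.1 ≤ T.len x := by
                rw [← T.bot_par x y hp]
                exact bot_elt T x
              linarith
          _ ≤ Dv T x - h := by rw [hDy, Dv_eq]; linarith

lemma gam_bpt_pt (p : Pt T) {h : ℝ} (h0 : 0 ≤ h) (hle : h ≤ Hgt T (some p)) :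
    dist (gam0 T (bpt T p.v h)) (gam0 T (some p)) ≤ Hgt T (some p) - h := by
  have hD : h ≤ Dv T p.v := hle.trans (Hgt_le_Dv T p)
  by_cases hS : Sm T p.v p.v.1 < h
  · rw [bpt_seg T hS hD, gam0_some, gam0_some]
    refine le_trans (gpt_dist T p.v _ _ _ _) ?_
    show |(h - Sm T p.v p.v.1) - p.t| ≤ Hgt T (some p) - h
    rw [Hgt_some] at hle ⊢
    rw [abs_of_nonpos (by linarith)]
    linarith
  · push_neg at hS
    cases hp : T.par p.v with
    | none =>
      have hx0 : p.v.1 = 0 := level0_of_par_none T hp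
      have hS0 : Sm T p.v p.v.1 = 0 := Sm_level0 T hx0
      have hh0 : h = 0 := by rw [hS0] at hS; linarith
      rw [bpt_of_par_none T hp hS, gam0_none, ← T.bot_root p.v hp, hh0, dist_comm, Hgt_some, hS0]
      simpa using gam_bot T p
    | some y =>
      have hl := T.par_some p.v y hp
      have hDy : Dv T y = Sm T p.v p.v.1 := by
        have hcg : Sm T y (y.1+1) = Sm T p.v (y.1+1) := by
          apply Sm_congr
          intro k hk
          exact (ch_par T hp (by omega)).symm
        rw [Dv, hcg, hl]
      rw [bpt_step T hp hS]
      calc dist (gam0 T (bpt T y h)) (gam0 T (some p))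
          ≤ dist (gam0 T (bpt T y h)) y.2.1 + dist y.2.1 (gam0 T (some p)) := dist_triangle _ _ _
        _ ≤ (Dv T y - h) + p.t := by
            have hb := gam_bpt_elt T h0 (x := y) (by rw [hDy]; exact hS)
            have hbe : dist y.2.1 (gam0 T (some p)) ≤ p.t := by
              rw [← T.bot_par p.v y hp, dist_comm]
              exact gam_bot T p
            linarith
        _ = Hgt T (some p) - h := by rw [hDy, Hgt_some]; ring

lemma gam_lip (p q : Y0 T) : dist (gam0 T p) (gam0 T q) ≤ dist0 T p q := by
  cases p with
  | none =>
    cases q with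
    | none => rw [dist_self, dist0_self]
    | some q =>
      have hb := gam_bpt_pt T q (le_refl 0) (Hgt_pos T q).le
      rw [bpt_nonpos T le_rfl, gam0_none] at hb
      rw [gam0_none, dist0, Mt_none_left, Hgt_none]
      calc dist T.x0 (gam0 T (some q)) ≤ Hgt T (some q) - 0 := hb
        _ = 0 + Hgt T (some q) - 2 * 0 := by ring
  | some p =>
    cases q with
    | none =>
      have hb := gam_bpt_pt T p (le_refl 0) (Hgt_pos T p).le
      rw [bpt_nonpos T le_rfl, gam0_none] at hb
      rw [gam0_none, dist0, Mt_symm, Mt_none_left, Hgt_none, dist_comm]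
      calc dist T.x0 (gam0 T (some p)) ≤ Hgt T (some p) - 0 := hb
        _ = Hgt T (some p) + 0 - 2 * 0 := by ring
    | some q =>
      have hM0 : 0 ≤ Mt T (some p) (some q) := Mt_nonneg T _ _
      have hMp : Mt T (some p) (some q) ≤ Hgt T (some p) := Mt_le_left T _ _
      have hMq : Mt T (some p) (some q) ≤ Hgt T (some q) := Mt_le_right T _ _
      have h1 := gam_bpt_pt T p hM0 hMp
      have h2 := gam_bpt_pt T q (h := Mt T (some p) (some q)) hM0 hMq
      rw [← mpt_eq T p q] at h2
      rw [dist0]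
      calc dist (gam0 T (some p)) (gam0 T (some q))
          ≤ dist (gam0 T (some p)) (gam0 T (bpt T p.v (Mt T (some p) (some q))))
            + dist (gam0 T (bpt T p.v (Mt T (some p) (some q)))) (gam0 T (some q)) := dist_triangle _ _ _
        _ ≤ (Hgt T (some p) - Mt T (some p) (some q)) + (Hgt T (some q) - Mt T (some p) (some q)) := by
            rw [dist_comm] at h1
            linarith
        _ = Hgt T (some p) + Hgt T (some q) - 2 * Mt T (some p) (some q) := by ring

lemma gam0_lipschitz : LipschitzWith 1 (gam0 T) :=
  LipschitzWith.mk_one fun p q => gam_lip T p q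

lemma elt_mem_range (v : Vtx T) : ∃ w : Y0 T, gam0 T w = v.2.1 := by
  suffices H : ∀ n (v : Vtx T), v.1 ≤ n → ∃ w : Y0 T, gam0 T w = v.2.1 from H v.1 v le_rfl
  intro n
  induction n with
  | zero =>
    intro v hv
    rcases lt_or_eq_of_le (T.len_nonneg v) with hlen | hlen
    · exact ⟨some ⟨v, T.len v, hlen, le_rfl⟩, gam_tip T v hlen⟩
    · have hbe : T.bot v = v.2.1 := by
        have := bot_elt T v
        rw [← hlen] at this
        exact dist_le_zero.mp this
      cases hp : T.par v with
      | none => exact ⟨none, by rw [gam0_none, ← T.bot_root v hp, hbe]⟩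
      | some y =>
        exfalso
        have := T.par_some v y hp
        omega
  | succ n ih =>
    intro v hv
    rcases lt_or_eq_of_le (T.len_nonneg v) with hlen | hlen
    · exact ⟨some ⟨v, T.len v, hlen, le_rfl⟩, gam_tip T v hlen⟩
    · have hbe : T.bot v = v.2.1 := by
        have := bot_elt T v
        rw [← hlen] at this
        exact dist_le_zero.mp this
      cases hp : T.par v with
      | none => exact ⟨none, by rw [gam0_none, ← T.bot_root v hp, hbe]⟩
      | some y =>
        have hl := T.par_some v y hp
        obtain ⟨w, hw⟩ := ih y (by omega)
        exact ⟨w, by rw [hw, ← T.bot_par v y hp, hbe]⟩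

end RT
namespace RT
open Set

variable {X : Type} [MetricSpace X] (T : TD X)

lemma olen_le_pow {x : Vtx T} {k : ℕ} (hk : 1 ≤ k) : olen T (ch T x k) ≤ (1/2:ℝ)^(k-1) := by
  cases hc : ch T x k with
  | none =>
    show (0:ℝ) ≤ _
    positivity
  | some w =>
    show T.len w ≤ _
    have hw : w.1 = k := ch_level T hc
    have := T.len_le w (by omega)
    rwa [hw] at this

lemma tail_bound (x : Vtx T) (a b : ℕ) (ha : 1 ≤ a) :
    ∑ k ∈ Finset.Ico a b, olen T (ch T x k) ≤ (1/2:ℝ)^(a-1) * 2 := by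
  calc ∑ k ∈ Finset.Ico a b, olen T (ch T x k)
      ≤ ∑ k ∈ Finset.Ico a b, (1/2:ℝ)^(k-1) :=
        Finset.sum_le_sum fun k hk => olen_le_pow T (by
          have := (Finset.mem_Ico.mp hk).1; omega)
    _ = ∑ i ∈ Finset.range (b - a), (1/2:ℝ)^(a-1) * (1/2:ℝ)^i := by
        rw [Finset.sum_Ico_eq_sum_range]
        apply Finset.sum_congr rfl
        intro i _
        rw [← pow_add]
        congr 1
        omega
    _ = (1/2:ℝ)^(a-1) * ∑ i ∈ Finset.range (b - a), (1/2:ℝ)^i := by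
        rw [Finset.mul_sum]
    _ ≤ (1/2:ℝ)^(a-1) * 2 := by
        have h2 := sum_geometric_two_le (b - a)
        have hp : (0:ℝ) ≤ (1/2:ℝ)^(a-1) := by positivity
        nlinarith

lemma Dv_bound : ∃ C : ℝ, 0 ≤ C ∧ ∀ x : Vtx T, Dv T x ≤ C := by
  haveI := (T.Ffin 0).to_subtype
  have hfin : (Set.range (fun w : {z : X // z ∈ T.F 0} => T.len ⟨0, w⟩)).Finite :=
    Set.finite_range _
  obtain ⟨C0, hC0⟩ := hfin.bddAbove
  refine ⟨max C0 0 + 2, by positivity, fun x => ?_⟩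
  have hch : (ch T x 0).isSome := ch_isSome T (by omega)
  rcases Option.isSome_iff_exists.mp hch with ⟨w, hw⟩
  have hw0 : w.1 = 0 := ch_level T hw
  have hlen : T.len w ≤ C0 := by
    obtain ⟨l, z⟩ := w
    simp only at hw0
    subst hw0
    exact hC0 ⟨z, rfl⟩
  have h1 : Sm T x 1 = olen T (ch T x 0) := by
    rw [Sm, Finset.sum_range_one]
  have h2 : olen T (ch T x 0) = T.len w := by rw [hw]; rfl
  have h3 : Dv T x - Sm T x 1 = ∑ k ∈ Finset.Ico 1 (x.1+1), olen T (ch T x k) := by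
    rw [Dv, Sm, Sm, Finset.sum_Ico_eq_sub _ (by omega)]
  have h4 := tail_bound T x 1 (x.1+1) le_rfl
  have h5 : ((1:ℝ)/2)^(1-1) * 2 = 2 := by norm_num
  rw [h5] at h4
  rw [← h3] at h4
  have : Sm T x 1 ≤ max C0 0 := by
    rw [h1, h2]
    exact hlen.trans (le_max_left _ _)
  linarith

lemma Hgt_drop (p : Pt T) {n : ℕ} (hn : n + 1 ≤ p.v.1) :
    Hgt T (some p) - Sm T p.v (n+1) ≤ (1/2:ℝ)^n * 2 := by
  have h1 : Hgt T (some p) ≤ Dv T p.v := Hgt_le_Dv T p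
  have h3 : Dv T p.v - Sm T p.v (n+1) = ∑ k ∈ Finset.Ico (n+1) (p.v.1+1), olen T (ch T p.v k) := by
    rw [Dv, Sm, Sm, Finset.sum_Ico_eq_sub _ (by omega)]
  have h4 := tail_bound T p.v (n+1) (p.v.1+1) (by omega)
  have h5 : ((1:ℝ)/2)^(n+1-1) = (1/2:ℝ)^n := by congr 1
  rw [h5, ← h3] at h4
  linarith

noncomputable def net (n m : ℕ) (δ : ℝ) : Set (Y0 T) :=
  insert none (Set.range (fun w : ((Σ k : Fin (n+1), {z : X // z ∈ T.F k.1}) × Fin (m+1)) =>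
    bpt T ⟨w.1.1.1, w.1.2⟩ (w.2.1 * δ)))

lemma net_finite (n m : ℕ) (δ : ℝ) : (net T n m δ).Finite := by
  haveI : ∀ k : Fin (n+1), Finite {z : X // z ∈ T.F k.1} := fun k => (T.Ffin k.1).to_subtype
  exact (Set.finite_range _).insert none

lemma bpt_mem_net {n m : ℕ} {δ : ℝ} (v : Vtx T) (hlev : v.1 ≤ n) {j : ℕ} (hj : j ≤ m) :
    bpt T v (j * δ) ∈ net T n m δ := by
  right
  exact ⟨⟨⟨⟨v.1, by omega⟩, v.2⟩, ⟨j, by omega⟩⟩, rfl⟩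

lemma low_cover {n m : ℕ} {δ : ℝ} (hδ : 0 < δ) {C : ℝ} (hC : ∀ x : Vtx T, Dv T x ≤ C)
    (hm : Nat.ceil (C/δ) ≤ m) (zp : Pt T) (hlev : zp.v.1 ≤ n) :
    ∃ y ∈ net T n m δ, dist0 T (some zp) y < δ := by
  have hH0 : 0 < Hgt T (some zp) := Hgt_pos T zp
  have hHC : Hgt T (some zp) ≤ C := (Hgt_le_Dv T zp).trans (hC zp.v)
  set j := Nat.floor (Hgt T (some zp) / δ) with hj
  have hj1 : (j : ℝ) * δ ≤ Hgt T (some zp) := by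
    rw [hj]
    have := Nat.floor_le (le_of_lt (div_pos hH0 hδ))
    calc (Nat.floor (Hgt T (some zp) / δ) : ℝ) * δ ≤ (Hgt T (some zp) / δ) * δ := by
          apply mul_le_mul_of_nonneg_right this hδ.le
      _ = Hgt T (some zp) := by field_simp
  have hj2 : Hgt T (some zp) < (j+1 : ℝ) * δ := by
    have := Nat.lt_floor_add_one (Hgt T (some zp) / δ)
    calc Hgt T (some zp) = (Hgt T (some zp) / δ) * δ := by field_simp
      _ < ((j : ℝ) + 1) * δ := by
          apply mul_lt_mul_of_pos_right _ hδ
          rw [hj]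
          exact_mod_cast this
  have hjm : j ≤ m := by
    have h1 : Hgt T (some zp) / δ ≤ C / δ := (div_le_div_iff_of_pos_right hδ).mpr hHC
    have h2 : j ≤ Nat.floor (C/δ) := Nat.floor_mono h1
    have h3 : Nat.floor (C/δ) ≤ Nat.ceil (C/δ) := Nat.floor_le_ceil _
    omega
  refine ⟨bpt T zp.v (j * δ), bpt_mem_net T zp.v hlev hjm, ?_⟩
  have hd := dist_bpt T zp (mul_nonneg (Nat.cast_nonneg j) hδ.le) hj1
  rw [hd]
  linarith

lemma Sm_le_Hgt (p : Pt T) (k : ℕ) (hk : k ≤ p.v.1) : Sm T p.v k ≤ Hgt T (some p) := by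
  rw [Hgt_some]
  have := Sm_mono T p.v hk
  linarith [p.pos]

lemma tb : TotallyBounded (Set.univ : Set (Y0 T)) := by
  rw [Metric.totallyBounded_iff]
  intro ε hε
  obtain ⟨C, hC0, hC⟩ := Dv_bound T
  obtain ⟨n, hn⟩ : ∃ n : ℕ, (1/2:ℝ)^n * 2 < ε/2 := by
    obtain ⟨n, hn⟩ := exists_pow_lt_of_lt_one (show (0:ℝ) < ε/4 by linarith)
      (by norm_num : (1/2:ℝ) < 1)
    exact ⟨n, by linarith⟩
  have hδ : 0 < ε/4 := by linarith
  refine ⟨net T n (Nat.ceil (C/(ε/4))) (ε/4), net_finite T _ _ _, ?_⟩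
  intro p _
  simp only [Set.mem_iUnion, Metric.mem_ball]
  cases p with
  | none =>
    refine ⟨none, Or.inl rfl, ?_⟩
    rw [dist_self]
    exact hε
  | some pp =>
    by_cases hlev : pp.v.1 ≤ n
    · obtain ⟨y, hy, hd⟩ := low_cover T hδ hC le_rfl pp hlev
      exact ⟨y, hy, by rw [dist_eq_dist0]; linarith⟩
    · push_neg at hlev
      have hs0 : 0 ≤ Sm T pp.v (n+1) := Sm_nonneg T _ _
      have hsH : Sm T pp.v (n+1) ≤ Hgt T (some pp) := Sm_le_Hgt T pp (n+1) (by omega)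
      have hdrop := Hgt_drop T pp (by omega : n + 1 ≤ pp.v.1)
      have hd1 : dist0 T (some pp) (bpt T pp.v (Sm T pp.v (n+1))) < ε/2 := by
        rw [dist_bpt T pp hs0 hsH]
        linarith
      rcases eq_or_lt_of_le hs0 with hz | hz
      · refine ⟨none, Or.inl rfl, ?_⟩
        rw [dist_eq_dist0]
        rw [bpt_nonpos T hz.ge] at hd1
        linarith
      · obtain ⟨p', hb, hcc, ht', hS'⟩ := bpt_spec T hz (hsH.trans (Hgt_le_Dv T pp))
        have hlev' : p'.v.1 ≤ n := by
          have hcg : Sm T pp.v p'.v.1 = Sm T p'.v p'.v.1 := by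
            apply Sm_congr
            intro k hk
            exact (ch_ch T hcc k (by omega)).symm
          have : Sm T pp.v p'.v.1 < Sm T pp.v (n+1) := by rw [hcg]; exact hS'
          have := lt_of_Sm_lt T this
          omega
        obtain ⟨y, hy, hd2⟩ := low_cover T hδ hC le_rfl p' hlev'
        rw [hb] at hd1
        refine ⟨y, hy, ?_⟩
        rw [dist_eq_dist0]
        calc dist0 T (some pp) y ≤ dist0 T (some pp) (some p') + dist0 T (some p') y :=
              dist0_triangle T _ _ _
          _ < ε/2 + ε/4 := add_lt_add hd1 hd2
          _ < ε := by linarith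

end RT
namespace RT
open UniformSpace

variable {A : Type} [MetricSpace A]

lemma dist_approx (x y : Completion A) (x' y' : A) {ε : ℝ}
    (h1 : dist x (x' : Completion A) < ε) (h2 : dist y (y' : Completion A) < ε) :
    |dist x y - dist x' y'| ≤ 2*ε := by
  have t1 : |dist x y - dist (x' : Completion A) y| ≤ dist x ↑x' := abs_dist_sub_le x ↑x' y
  have t2 : |dist (x' : Completion A) y - dist (↑x') (↑y' : Completion A)| ≤ dist y ↑y' := by
    have := abs_dist_sub_le y (↑y' : Completion A) ↑x'
    rw [dist_comm y (↑x' : Completion A), dist_comm (↑y' : Completion A) (↑x' : Completion A)] at this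
    exact this
  have t3 := abs_sub_le (dist x y) (dist (x' : Completion A) y) (dist (↑x' : Completion A) ↑y')
  rw [Completion.dist_eq] at t3
  rw [Completion.dist_eq] at t2
  linarith

lemma fourpt_completion
    (h4 : ∀ a b c d : A, dist a b + dist c d ≤ max (dist a c + dist b d) (dist a d + dist b c)) :
    ∀ a b c d : Completion A,
      dist a b + dist c d ≤ max (dist a c + dist b d) (dist a d + dist b c) := by
  intro a b c d
  apply le_of_forall_pos_le_add
  intro ε hε
  have hdr := Completion.denseRange_coe (α := A)
  obtain ⟨a', ha⟩ := Metric.denseRange_iff.mp hdr a (ε/8) (by linarith)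
  obtain ⟨b', hb⟩ := Metric.denseRange_iff.mp hdr b (ε/8) (by linarith)
  obtain ⟨c', hc⟩ := Metric.denseRange_iff.mp hdr c (ε/8) (by linarith)
  obtain ⟨d', hd⟩ := Metric.denseRange_iff.mp hdr d (ε/8) (by linarith)
  have m1 := abs_le.mp (dist_approx a b a' b' ha hb)
  have m2 := abs_le.mp (dist_approx c d c' d' hc hd)
  have m3 := abs_le.mp (dist_approx a c a' c' ha hc)
  have m4 := abs_le.mp (dist_approx b d b' d' hb hd)
  have m5 := abs_le.mp (dist_approx a d a' d' ha hd)
  have m6 := abs_le.mp (dist_approx b c b' c' hb hc)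
  have h0 := h4 a' b' c' d'
  have hmax : max (dist a' c' + dist b' d') (dist a' d' + dist b' c')
      ≤ max (dist a c + dist b d) (dist a d + dist b c) + ε/2 := by
    apply max_le
    · refine le_trans ?_ (add_le_add_left (le_max_left _ _) _)
      linarith
    · refine le_trans ?_ (add_le_add_left (le_max_right _ _) _)
      linarith
  linarith

lemma tpoint_completion
    (h4C : ∀ a b c d : Completion A,
      dist a b + dist c d ≤ max (dist a c + dist b d) (dist a d + dist b c))
    (hg : ∀ p q : A, ∀ t : ℝ, 0 ≤ t → t ≤ dist p q →
      ∃ z : A, dist p z = t ∧ dist z q = dist p q - t) :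
    ∀ (a b : Completion A) (t : ℝ), 0 ≤ t → t ≤ dist a b →
      ∃ z : Completion A, dist a z = t ∧ dist z b = dist a b - t := by
  intro a b t ht0 htd
  have hdr := Completion.denseRange_coe (α := A)
  have hex : ∀ n : ℕ, ∃ z : A, dist a ↑z ≤ t + 5 * (1/((n:ℝ)+1)) ∧
      dist (↑z : Completion A) b ≤ dist a b - t + 5 * (1/((n:ℝ)+1)) := by
    intro n
    have hpos : (0:ℝ) < 1/((n:ℝ)+1) := by positivity
    obtain ⟨a', ha⟩ := Metric.denseRange_iff.mp hdr a (1/((n:ℝ)+1)) hpos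
    obtain ⟨b', hb⟩ := Metric.denseRange_iff.mp hdr b (1/((n:ℝ)+1)) hpos
    have habs := abs_le.mp (dist_approx a b a' b' ha hb)
    obtain ⟨z, hz1, hz2⟩ := hg a' b' (min t (dist a' b')) (le_min ht0 dist_nonneg)
      (min_le_right _ _)
    have htt' : t - 2 * (1/((n:ℝ)+1)) ≤ min t (dist a' b') := by
      rcases le_total t (dist a' b') with hm | hm
      · rw [min_eq_left hm]; linarith
      · rw [min_eq_right hm]; linarith
    refine ⟨z, ?_, ?_⟩
    · calc dist a ↑z ≤ dist a ↑a' + dist (↑a' : Completion A) ↑z := dist_triangle _ _ _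
        _ ≤ 1/((n:ℝ)+1) + min t (dist a' b') := by
            rw [Completion.dist_eq, hz1]
            linarith
        _ ≤ t + 5 * (1/((n:ℝ)+1)) := by
            have := min_le_left t (dist a' b')
            linarith
    · calc dist (↑z : Completion A) b ≤ dist (↑z : Completion A) ↑b' + dist (↑b' : Completion A) b :=
            dist_triangle _ _ _
        _ ≤ (dist a' b' - min t (dist a' b')) + 1/((n:ℝ)+1) := by
            rw [Completion.dist_eq, hz2, dist_comm b ↑b'] at *
            linarith [hb]
        _ ≤ dist a b - t + 5 * (1/((n:ℝ)+1)) := by linarith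
  choose zs hz1 hz2 using hex
  have key : ∀ p q : ℕ, dist (↑(zs p) : Completion A) ↑(zs q) ≤
      5 * (1/((p:ℝ)+1)) + 5 * (1/((q:ℝ)+1)) := by
    intro p q
    have h4 := h4C (↑(zs p)) (↑(zs q)) a b
    have e1 := hz1 p
    have e2 := hz2 p
    have e3 := hz1 q
    have e4 := hz2 q
    rw [dist_comm a (↑(zs p) : Completion A)] at e1
    rw [dist_comm a (↑(zs q) : Completion A)] at e3
    rcases max_cases (dist (↑(zs p) : Completion A) a + dist (↑(zs q) : Completion A) b)
      (dist (↑(zs p) : Completion A) b + dist (↑(zs q) : Completion A) a) with ⟨hm, _⟩ | ⟨hm, _⟩ <;>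
      rw [hm] at h4 <;> linarith
  have hcs : CauchySeq (fun n => ((zs n : Completion A))) := by
    refine cauchySeq_of_le_tendsto_0 (fun N => 10 * (1/((N:ℝ)+1))) ?_ ?_
    · intro p q N hp hq
      have hmp : 5 * (1/((p:ℝ)+1)) ≤ 5 * (1/((N:ℝ)+1)) := by
        apply mul_le_mul_of_nonneg_left _ (by norm_num : (0:ℝ) ≤ 5)
        apply div_le_div_of_nonneg_left (by norm_num) (by positivity)
        exact_mod_cast Nat.succ_le_succ hp
      have hmq : 5 * (1/((q:ℝ)+1)) ≤ 5 * (1/((N:ℝ)+1)) := by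
        apply mul_le_mul_of_nonneg_left _ (by norm_num : (0:ℝ) ≤ 5)
        apply div_le_div_of_nonneg_left (by norm_num) (by positivity)
        exact_mod_cast Nat.succ_le_succ hq
      have := key p q
      linarith
    · have := tendsto_one_div_add_atTop_nhds_zero_nat.const_mul (10:ℝ)
      simpa using this
  obtain ⟨z, hzlim⟩ := cauchySeq_tendsto_of_complete hcs
  have l1 : Filter.Tendsto (fun n => dist a (↑(zs n) : Completion A)) Filter.atTop (nhds (dist a z)) :=
    Filter.Tendsto.dist tendsto_const_nhds hzlim
  have l2 : Filter.Tendsto (fun n => dist (↑(zs n) : Completion A) b) Filter.atTop (nhds (dist z b)) :=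
    Filter.Tendsto.dist hzlim tendsto_const_nhds
  have lt1 : Filter.Tendsto (fun n : ℕ => t + 5 * (1/((n:ℝ)+1))) Filter.atTop (nhds t) := by
    have := tendsto_one_div_add_atTop_nhds_zero_nat.const_mul (5:ℝ)
    have h2 := Filter.Tendsto.add (tendsto_const_nhds (x := t) (f := Filter.atTop (α := ℕ))) this
    simpa using h2
  have lt2 : Filter.Tendsto (fun n : ℕ => dist a b - t + 5 * (1/((n:ℝ)+1))) Filter.atTop
      (nhds (dist a b - t)) := by
    have := tendsto_one_div_add_atTop_nhds_zero_nat.const_mul (5:ℝ)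
    have h2 := Filter.Tendsto.add (tendsto_const_nhds (x := dist a b - t) (f := Filter.atTop (α := ℕ))) this
    simpa using h2
  have hA : dist a z ≤ t := le_of_tendsto_of_tendsto' l1 lt1 hz1
  have hB : dist z b ≤ dist a b - t := le_of_tendsto_of_tendsto' l2 lt2 hz2
  have htri := dist_triangle a z b
  exact ⟨z, le_antisymm hA (by linarith), le_antisymm hB (by linarith)⟩

lemma compactSpace_completion (h : TotallyBounded (Set.univ : Set A)) :
    CompactSpace (Completion A) := by
  have h1 : TotallyBounded (Set.range ((↑) : A → Completion A)) := by
    rw [← Set.image_univ]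
    exact TotallyBounded.image h (Completion.coe_isometry (α := A)).uniformContinuous
  have h2 : TotallyBounded (Set.univ : Set (Completion A)) := by
    have hd : Dense (Set.range ((↑) : A → Completion A)) := Completion.denseRange_coe
    rw [← hd.closure_eq]
    exact h1.closure
  exact ⟨isCompact_iff_totallyBounded_isComplete.mpr
    ⟨h2, completeSpace_iff_isComplete_univ.mp inferInstance⟩⟩

lemma lipschitz_extension {W : Type} [MetricSpace W] [CompleteSpace W] (f : A → W)
    (hf : LipschitzWith 1 f) :
    ∃ g : Completion A → W, LipschitzWith 1 g ∧ ∀ a : A, g ↑a = f a := by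
  have huc : UniformContinuous f := hf.uniformContinuous
  have hc : Continuous (Completion.extension f) := Completion.continuous_extension
  refine ⟨Completion.extension f, ?_, fun a => Completion.extension_coe huc a⟩
  apply LipschitzWith.mk_one
  intro x y
  refine Completion.induction_on₂ x y ?_ ?_
  · apply isClosed_le
    · exact ((hc.comp continuous_fst).dist (hc.comp continuous_snd))
    · exact continuous_fst.dist continuous_snd
  · intro a b
    rw [Completion.extension_coe huc, Completion.extension_coe huc, Completion.dist_eq]
    simpa using hf.dist_le_mul a b

end RT

section RTreeCriterion

lemma isRTree_of_fourpt (Z : Type) [MetricSpace Z]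
    (h4 : ∀ a b c d : Z, dist a b + dist c d ≤ max (dist a c + dist b d) (dist a d + dist b c))
    (hg : ∀ a b : Z, ∀ t : ℝ, 0 ≤ t → t ≤ dist a b →
      ∃ z : Z, dist a z = t ∧ dist z b = dist a b - t) :
    IsRTree Z := by
  have key : ∀ (x y z w : Z), z ∈ MetricSegment x y → w ∈ MetricSegment x y →
      dist x z ≤ dist x w → dist z w = dist x w - dist x z := by
    intro x y z w hz hw hle
    have hz' : dist x z + dist z y = dist x y := hz
    have hw' : dist x w + dist w y = dist x y := hw
    have h4' := h4 z w x y
    have e1 : dist z x + dist w y = dist x y - (dist x w - dist x z) := by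
      rw [dist_comm z x]
      linarith
    have e2 : dist z y + dist w x = dist x y + (dist x w - dist x z) := by
      rw [dist_comm w x]
      linarith
    have hmax : max (dist z x + dist w y) (dist z y + dist w x)
        = dist x y + (dist x w - dist x z) := by
      rw [e1, e2]
      apply max_eq_right
      linarith
    rw [hmax] at h4'
    have hlo := dist_triangle x z w
    have := dist_triangle x w z
    apply le_antisymm
    · linarith
    · linarith
  have seg_dist : ∀ (x y z w : Z), z ∈ MetricSegment x y → w ∈ MetricSegment x y →
      dist z w = |dist x z - dist x w| := by
    intro x y z w hz hw
    rcases le_total (dist x z) (dist x w) with hle | hle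
    · rw [key x y z w hz hw hle, abs_of_nonpos (by linarith), neg_sub]
    · rw [dist_comm z w, key x y w z hw hz hle, abs_of_nonneg (by linarith)]
  constructor
  · intro x y
    have hmem : ∀ z : MetricSegment x y, dist x z.1 ∈ Set.Icc (0:ℝ) (dist x y) := by
      intro z
      have hz : dist x z.1 + dist z.1 y = dist x y := z.2
      exact ⟨dist_nonneg, by linarith [dist_nonneg (x := z.1) (y := y)]⟩
    have hiso : ∀ z w : MetricSegment x y,
        dist (⟨dist x z.1, hmem z⟩ : Set.Icc (0:ℝ) (dist x y)) ⟨dist x w.1, hmem w⟩ = dist z w := by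
      intro z w
      rw [Subtype.dist_eq, Subtype.dist_eq, Real.dist_eq]
      exact (seg_dist x y z.1 w.1 z.2 w.2).symm
    have hinj : Function.Injective (fun z : MetricSegment x y =>
        (⟨dist x z.1, hmem z⟩ : Set.Icc (0:ℝ) (dist x y))) := by
      intro z w hzw
      have hzw' : (⟨dist x z.1, hmem z⟩ : Set.Icc (0:ℝ) (dist x y)) = ⟨dist x w.1, hmem w⟩ := hzw
      have h0 : dist (⟨dist x z.1, hmem z⟩ : Set.Icc (0:ℝ) (dist x y)) ⟨dist x w.1, hmem w⟩ = 0 := by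
        rw [hzw', dist_self]
      rw [hiso] at h0
      exact dist_eq_zero.mp h0
    have hsurj : Function.Surjective (fun z : MetricSegment x y =>
        (⟨dist x z.1, hmem z⟩ : Set.Icc (0:ℝ) (dist x y))) := by
      rintro ⟨t, ht0, htd⟩
      obtain ⟨z, hz1, hz2⟩ := hg x y t ht0 htd
      refine ⟨⟨z, ?_⟩, ?_⟩
      · show dist x z + dist z y = dist x y
        rw [hz1, hz2]
        ring
      · exact Subtype.ext hz1
    exact ⟨{ toEquiv := Equiv.ofBijective _ ⟨hinj, hsurj⟩,
             isometry_toFun := Isometry.of_dist_eq hiso }⟩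
  · intro x y z hsegs
    have ht00 : 0 ≤ (dist x y + dist y z - dist x z)/2 := by
      have := dist_triangle x y z
      linarith
    have ht0d : (dist x y + dist y z - dist x z)/2 ≤ dist y x := by
      have h1 := dist_triangle y x z
      rw [dist_comm y x] at h1 ⊢
      linarith
    obtain ⟨w, hw1, hw2⟩ := hg y x _ ht00 ht0d
    have hwxy : w ∈ MetricSegment x y := by
      show dist x w + dist w y = dist x y
      rw [dist_comm x w, dist_comm w y, hw2, hw1, dist_comm y x]
      ring
    have hwz : dist w z = dist y z - (dist x y + dist y z - dist x z)/2 := by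
      have h4' := h4 w z x y
      have e1 : dist w x + dist z y = dist x y + dist y z - (dist x y + dist y z - dist x z)/2 := by
        rw [dist_comm w x] at hw2 ⊢
        rw [hw2, dist_comm z y, dist_comm y x]
        ring
      have e2 : dist w y + dist z x = dist x y + dist y z - (dist x y + dist y z - dist x z)/2 := by
        rw [dist_comm w y, hw1, dist_comm z x]
        ring
      have hmax : max (dist w x + dist z y) (dist w y + dist z x)
          = dist x y + dist y z - (dist x y + dist y z - dist x z)/2 := by
        rw [e1, e2, max_self]
      rw [hmax] at h4'
      have htri := dist_triangle y w z
      rw [hw1] at htri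
      apply le_antisymm
      · linarith
      · linarith
    have hwyz : w ∈ MetricSegment y z := by
      show dist y w + dist w z = dist y z
      rw [hw1, hwz]
      ring
    have hwy : w = y := by
      have hwmem : w ∈ ({y} : Set Z) := by
        rw [← hsegs]
        exact ⟨hwxy, hwyz⟩
      exact hwmem
    have ht0z : (dist x y + dist y z - dist x z)/2 = 0 := by
      rw [← hw1, hwy, dist_self]
    linarith

end RTreeCriterion

/-- A compact Lipschitz connected metric space whose intrinsic metric is totally
bounded is a 1-Lipschitz image of a compact ℝ-tree. -/
theorem compact_image_of_compact_rtree (X : Type) [MetricSpace X] [CompactSpace X]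
    (h : LipschitzConnected X)
    (htb : ∀ ε : ℝ, 0 < ε → ∃ F : Set X, F.Finite ∧ ∀ x : X, ∃ y ∈ F, intrinsicDist x y < ε) :
    ∃ (Y : Type) (_ : MetricSpace Y) (_ : CompactSpace Y), IsRTree Y ∧
      ∃ γ : Y → X, Function.Surjective γ ∧ LipschitzWith 1 γ := by
  rcases isEmpty_or_nonempty X with hX | hX
  · refine ⟨X, inferInstance, inferInstance, ⟨?_, ?_⟩, id, Function.surjective_id,
      LipschitzWith.id⟩
    · intro x
      exact (IsEmpty.false x).elim
    · intro x
      exact (IsEmpty.false x).elim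
  · obtain ⟨xa⟩ := hX
    choose F Ffin Fnet using fun n : ℕ => htb ((1/2:ℝ)^n) (by positivity)
    obtain ⟨x00, hx00, _⟩ := Fnet 0 xa
    have hdata : ∀ v : (Σ n : ℕ, {z : X // z ∈ F n}),
        ∃ (o : Option (Σ n : ℕ, {z : X // z ∈ F n})) (K : ℝ) (f : Set.Icc (0:ℝ) 1 → X) (b : X),
          0 ≤ K ∧
          (1 ≤ v.1 → (o.isSome)) ∧
          (∀ y, o = some y → y.1 + 1 = v.1) ∧
          (1 ≤ v.1 → K ≤ (1/2:ℝ)^(v.1 - 1)) ∧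
          LipschitzWith K.toNNReal f ∧
          f ⟨0, by norm_num⟩ = b ∧ f ⟨1, by norm_num⟩ = v.2.1 ∧
          (o = none → b = x00) ∧ (∀ y, o = some y → b = y.2.1) := by
      rintro ⟨n, z⟩
      cases n with
      | zero =>
        obtain ⟨K, hK0, f, hf, hf0, hf1⟩ := RT.PSet_nonempty h x00 z.1
        refine ⟨none, K, f, x00, hK0, ?_, ?_, ?_, hf, hf0, hf1, fun _ => rfl, ?_⟩
        · intro hc; exact absurd hc (by norm_num)
        · intro y hy; exact nomatch hy
        · intro hc; exact absurd hc (by norm_num)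
        · intro y hy; exact nomatch hy
      | succ n =>
        obtain ⟨y, hyF, hyd⟩ := Fnet n z.1
        obtain ⟨K, hKmem, hKlt⟩ := RT.exists_path_lt h hyd
        obtain ⟨hK0, f, hf, hf0, hf1⟩ := RT.PSet_symm hKmem
        refine ⟨some ⟨n, ⟨y, hyF⟩⟩, K, f, y, hK0, fun _ => rfl, ?_, ?_, hf, hf0, hf1, ?_, ?_⟩
        · intro y' hy'
          injection hy' with h2
          rw [← h2]
        · intro _
          have he : (⟨n+1, z⟩ : Σ n : ℕ, {z : X // z ∈ F n}).1 - 1 = n := rfl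
          rw [he]
          exact hKlt.le
        · intro hc; exact nomatch hc
        · intro y' hy'
          injection hy' with h2
          rw [← h2]
    choose par len pth bot hlen0 hisSome hsome hle hlip hf0 hf1 hbroot hbpar using hdata
    let T : RT.TD X :=
      RT.TD.mk F Ffin x00 par len pth bot hlen0 hisSome hsome hle hlip hf0 hf1 hbroot hbpar
    haveI : CompleteSpace X := complete_of_compact
    have h4C := RT.fourpt_completion (A := RT.Y0 T)
      (fun a b c d => RT.fourpt0 T a b c d)
    have hgeo := RT.tpoint_completion (A := RT.Y0 T) h4C
      (fun p q t ht0 htd => RT.exists_mid T p q ht0 htd)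
    obtain ⟨g, hg1, hg2⟩ := RT.lipschitz_extension (RT.gam0 T) (RT.gam0_lipschitz T)
    haveI : CompactSpace (UniformSpace.Completion (RT.Y0 T)) :=
      RT.compactSpace_completion (RT.tb T)
    refine ⟨UniformSpace.Completion (RT.Y0 T), inferInstance, inferInstance, ?_, g, ?_, hg1⟩
    · exact isRTree_of_fourpt _ h4C hgeo
    · have hcont : Continuous g := hg1.continuous
      have hclosed : IsClosed (Set.range g) := (isCompact_range hcont).isClosed
      intro zx
      have hmemcl : zx ∈ closure (Set.range g) := by
        rw [Metric.mem_closure_iff]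
        intro ε hε
        obtain ⟨n, hn⟩ := exists_pow_lt_of_lt_one hε (by norm_num : (1/2:ℝ) < 1)
        obtain ⟨y, hyF, hyd⟩ := Fnet n zx
        obtain ⟨w, hw⟩ := RT.elt_mem_range T ⟨n, ⟨y, hyF⟩⟩
        refine ⟨g ↑w, ⟨↑w, rfl⟩, ?_⟩
        rw [hg2 w, hw]
        calc dist zx y ≤ intrinsicDist zx y := RT.dist_le_intrinsic h zx y
          _ < (1/2:ℝ)^n := hyd
          _ < ε := hn
      rw [hclosed.closure_eq] at hmemcl
      exact hmemcl
end

section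
/- Let L ≥ 1 and let Y be a compact metric space that is L-Lipschitz connected (for all x,y ∈ Y there is an L-Lipschitz map f : [0, d_Y(x,y)] → Y with f(0) = x and f(d_Y(x,y)) = y). If there exists a surjective Lipschitz map f : Y → X onto a metric space X, then X is compact, Lipschitz connected, and the intrinsic metric d_IX of X is totally bounded, i.e. for every ε > 0 there is a finite set F ⊆ X such that every x ∈ X satisfies d_IX(x,y) < ε for some y ∈ F. -/
lemma exists_path_aux {Y X : Type} [MetricSpace Y] [MetricSpace X] {L K : NNReal}
    (hY : LLipschitzConnected L Y) {f : Y → X} (hlipf : LipschitzWith K f) (a b : Y) :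
    ∃ h : Set.Icc (0:ℝ) 1 → X,
      LipschitzWith (K * L * Real.toNNReal (dist a b)) h ∧
      h ⟨0, by norm_num⟩ = f a ∧ h ⟨1, by norm_num⟩ = f b := by
  obtain ⟨g, hg, hg0, hg1⟩ := hY a b
  have hd0 : 0 ≤ dist a b := dist_nonneg
  have hmem : ∀ t : Set.Icc (0:ℝ) 1, t.1 * dist a b ∈ Set.Icc (0:ℝ) (dist a b) := by
    intro t
    refine ⟨mul_nonneg t.2.1 hd0, ?_⟩
    calc t.1 * dist a b ≤ 1 * dist a b := mul_le_mul_of_nonneg_right t.2.2 hd0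
      _ = dist a b := one_mul _
  refine ⟨fun t => f (g ⟨t.1 * dist a b, hmem t⟩), ?_, ?_, ?_⟩
  · apply LipschitzWith.of_dist_le_mul
    intro s t
    have h1 := hlipf.dist_le_mul (g ⟨s.1 * dist a b, hmem s⟩) (g ⟨t.1 * dist a b, hmem t⟩)
    have h2 : dist (g ⟨s.1 * dist a b, hmem s⟩) (g ⟨t.1 * dist a b, hmem t⟩)
        ≤ (L : ℝ) * dist (s.1 * dist a b) (t.1 * dist a b) :=
      hg.dist_le_mul ⟨s.1 * dist a b, hmem s⟩ ⟨t.1 * dist a b, hmem t⟩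
    have h3 : dist (s.1 * dist a b) (t.1 * dist a b) = dist s.1 t.1 * dist a b := by
      rw [Real.dist_eq, Real.dist_eq, ← sub_mul, abs_mul, abs_of_nonneg hd0]
    have h4 : dist s t = dist s.1 t.1 := Subtype.dist_eq s t
    have hc : ((K * L * Real.toNNReal (dist a b) : NNReal) : ℝ)
        = (K : ℝ) * L * dist a b := by
      push_cast
      rw [Real.coe_toNNReal _ hd0]
    calc dist (f (g ⟨s.1 * dist a b, hmem s⟩)) (f (g ⟨t.1 * dist a b, hmem t⟩))
        ≤ K * dist (g ⟨s.1 * dist a b, hmem s⟩) (g ⟨t.1 * dist a b, hmem t⟩) := h1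
      _ ≤ K * ((L : ℝ) * dist (s.1 * dist a b) (t.1 * dist a b)) :=
          mul_le_mul_of_nonneg_left h2 K.2
      _ = ((K * L * Real.toNNReal (dist a b) : NNReal) : ℝ) * dist s t := by
          rw [hc, h3, h4]; ring
  · show f (g ⟨(0:ℝ) * dist a b, hmem ⟨0, by norm_num⟩⟩) = f a
    have : (⟨(0:ℝ) * dist a b, hmem ⟨0, by norm_num⟩⟩ : Set.Icc (0:ℝ) (dist a b))
        = ⟨0, ⟨le_refl 0, dist_nonneg⟩⟩ := Subtype.ext (zero_mul _)
    rw [this, hg0]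
  · show f (g ⟨(1:ℝ) * dist a b, hmem ⟨1, by norm_num⟩⟩) = f b
    have : (⟨(1:ℝ) * dist a b, hmem ⟨1, by norm_num⟩⟩ : Set.Icc (0:ℝ) (dist a b))
        = ⟨dist a b, ⟨dist_nonneg, le_refl _⟩⟩ := Subtype.ext (one_mul _)
    rw [this, hg1]

lemma intrinsicDist_le_aux {Y X : Type} [MetricSpace Y] [MetricSpace X] {L K : NNReal}
    (hY : LLipschitzConnected L Y) {f : Y → X} (hlipf : LipschitzWith K f) (a b : Y) :
    intrinsicDist (f a) (f b) ≤ (K : ℝ) * L * dist a b := by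
  obtain ⟨h, hh, h0, h1⟩ := exists_path_aux hY hlipf a b
  have hc : ((K * L * Real.toNNReal (dist a b) : NNReal) : ℝ)
      = (K : ℝ) * L * dist a b := by
    push_cast; rw [Real.coe_toNNReal _ dist_nonneg]
  have hmem : (K : ℝ) * L * dist a b ∈ {K' : ℝ | 0 ≤ K' ∧ ∃ p : Set.Icc (0:ℝ) 1 → X,
      LipschitzWith K'.toNNReal p ∧ p ⟨0, by norm_num⟩ = f a ∧ p ⟨1, by norm_num⟩ = f b} := by
    refine ⟨by positivity, h, ?_, h0, h1⟩
    rw [← hc, Real.toNNReal_coe]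
    exact hh
  exact csInf_le ⟨0, fun k hk => hk.1⟩ hmem

/-- A Lipschitz image of an `L`-Lipschitz connected compact metric space is compact,
Lipschitz connected, and has totally bounded intrinsic metric. -/
theorem image_of_compact_L_lipschitz_connected (L : NNReal) (hL : 1 ≤ L)
    (Y : Type) [MetricSpace Y] [CompactSpace Y] (hY : LLipschitzConnected L Y)
    (X : Type) [MetricSpace X] (f : Y → X)
    (hsurj : Function.Surjective f) (hlip : ∃ K : NNReal, LipschitzWith K f) :
    CompactSpace X ∧ LipschitzConnected X ∧
      ∀ ε : ℝ, 0 < ε → ∃ F : Set X, F.Finite ∧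
        ∀ x : X, ∃ y ∈ F, intrinsicDist x y < ε := by
  obtain ⟨K, hK⟩ := hlip
  have hcont : Continuous f := hK.continuous
  have hcomp : CompactSpace X := by
    rw [← isCompact_univ_iff, ← Set.range_eq_univ.mpr hsurj]
    exact isCompact_range hcont
  refine ⟨hcomp, ?_, ?_⟩
  · intro x y
    obtain ⟨a, ha⟩ := hsurj x
    obtain ⟨b, hb⟩ := hsurj y
    obtain ⟨h, hh, h0, h1⟩ := exists_path_aux hY hK a b
    exact ⟨h, ⟨_, hh⟩, by rw [h0, ha], by rw [h1, hb]⟩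
  · intro ε hε
    set C : ℝ := (K : ℝ) * L with hC
    have hC0 : 0 ≤ C := by positivity
    have hδ : 0 < ε / (C + 1) := by positivity
    obtain ⟨t, htf, hts⟩ := (Metric.totallyBounded_iff.mp (isCompact_univ : IsCompact (Set.univ : Set Y)).totallyBounded)
      (ε / (C + 1)) hδ
    refine ⟨f '' t, htf.image f, ?_⟩
    intro x
    obtain ⟨a, ha⟩ := hsurj x
    have : a ∈ ⋃ y ∈ t, Metric.ball y (ε / (C + 1)) := hts (Set.mem_univ a)
    obtain ⟨b, hbt, hab⟩ := Set.mem_iUnion₂.mp this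
    refine ⟨f b, Set.mem_image_of_mem f hbt, ?_⟩
    have h1 : intrinsicDist x (f b) ≤ C * dist a b := by
      rw [← ha]; exact intrinsicDist_le_aux hY hK a b
    have h2 : C * dist a b ≤ C * (ε / (C + 1)) :=
      mul_le_mul_of_nonneg_left (le_of_lt (Metric.mem_ball.mp hab)) hC0
    have h3 : C * (ε / (C + 1)) < (C + 1) * (ε / (C + 1)) := by
      apply mul_lt_mul_of_pos_right _ hδ
      linarith
    have h4 : (C + 1) * (ε / (C + 1)) = ε := by
      field_simp
    linarith
end
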